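/- Let (n̲,A) be a conservative polymatrix game with formal equilibrium q, skew-symmetric model A_0 and scaling vector (λ_1,…,λ_p) (i.e. every block of A − A_0 D has equal rows, where D = diag(λ_1 I_{n_1},…,λ_p I_{n_p})). Then the polymatrix replicator is Hamiltonian in Γ°_n̲ with respect to π_{A_0}: for every x ∈ Γ°_n̲, X_{(n̲,A)}(x) = π_{A_0}(x) ∇H(x), where H(x) = Σ_{β=1}^p λ_β Σ_{j∈β} q_j log x_j (so ∇H(x)_j = λ_β q_j/x_j for j in group β). -/

import Mathlib

open Matrix

/-- Index set of a polymatrix game with signature `n : Fin p → ℕ`: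
`i = ⟨α, k⟩` is the `k`-th strategy of group `α`. -/
abbrev Idx (p : ℕ) (n : Fin p → ℕ) : Type := (α : Fin p) × Fin (n α)

noncomputable section

/-- The polymatrix replicator vector field `X_{(n̲,A)}`; note that
`Σ_β (x^α)ᵗ A^{α,β} x^β = Σ_{k ∈ α} x_k (Ax)_k`. -/
def replicator {p : ℕ} {n : Fin p → ℕ} (A : Matrix (Idx p n) (Idx p n) ℝ)
    (x : Idx p n → ℝ) (i : Idx p n) : ℝ :=
  x i * (A.mulVec x i - ∑ k : Fin (n i.1), x ⟨i.1, k⟩ * A.mulVec x ⟨i.1, k⟩)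

/-- The polytope `Γ_n̲` (product of simplexes). -/
def Gamma (p : ℕ) (n : Fin p → ℕ) : Set (Idx p n → ℝ) :=
  {x | (∀ i, 0 ≤ x i) ∧ ∀ α : Fin p, ∑ k : Fin (n α), x ⟨α, k⟩ = 1}

/-- The relative interior `Γ°_n̲`. -/
def GammaInt (p : ℕ) (n : Fin p → ℕ) : Set (Idx p n → ℝ) :=
  {x | (∀ i, 0 < x i) ∧ ∀ α : Fin p, ∑ k : Fin (n α), x ⟨α, k⟩ = 1}

/-- The block diagonal matrix `T_x = diag(T^1_x,…,T^p_x)`, `T^α_x = x^α 𝟙ᵗ - I`. -/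
def Tmat {p : ℕ} {n : Fin p → ℕ} (x : Idx p n → ℝ) : Matrix (Idx p n) (Idx p n) ℝ :=
  fun i j => (if i.1 = j.1 then x i else 0) - (if i = j then 1 else 0)

/-- The bivector `π_A(x) = - T_x D_x A D_x T_xᵀ`. -/
def piA {p : ℕ} {n : Fin p → ℕ} (A : Matrix (Idx p n) (Idx p n) ℝ) (x : Idx p n → ℝ) :
    Matrix (Idx p n) (Idx p n) ℝ :=
  -(Tmat x * Matrix.diagonal x * A * Matrix.diagonal x * (Tmat x)ᵀ)

/-- A formal equilibrium of the polymatrix game `(n̲, A)`. -/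
def FormalEq {p : ℕ} {n : Fin p → ℕ} (A : Matrix (Idx p n) (Idx p n) ℝ)
    (q : Idx p n → ℝ) : Prop :=
  (∀ (α : Fin p) (i j : Fin (n α)), A.mulVec q ⟨α, i⟩ = A.mulVec q ⟨α, j⟩) ∧
  ∀ α : Fin p, ∑ j : Fin (n α), q ⟨α, j⟩ = 1

/-- Every block `M^{α,β}` of `M` (in the block decomposition induced by the signature)
has all of its rows equal. -/
def EqualRows {p : ℕ} {n : Fin p → ℕ} (M : Matrix (Idx p n) (Idx p n) ℝ) : Prop :=
  ∀ (α β : Fin p) (i i' : Fin (n α)) (j : Fin (n β)), M ⟨α, i⟩ ⟨β, j⟩ = M ⟨α, i'⟩ ⟨β, j⟩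

/-- A polymatrix game `(n̲,A)` is conservative iff it has a formal equilibrium and
`A ∼ A₀ D` for some skew-symmetric `A₀` and `D = diag(λ_1 I_{n_1},…,λ_p I_{n_p})`
with all `λ_β ≠ 0`. -/
def IsConservative {p : ℕ} {n : Fin p → ℕ} (A : Matrix (Idx p n) (Idx p n) ℝ) : Prop :=
  (∃ q : Idx p n → ℝ, FormalEq A q) ∧
  ∃ (A₀ : Matrix (Idx p n) (Idx p n) ℝ) (lam : Fin p → ℝ),
    A₀ᵀ = -A₀ ∧ (∀ β, lam β ≠ 0) ∧
      EqualRows (A - A₀ * Matrix.diagonal (fun i => lam i.1))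

lemma sigma_sum {p : ℕ} {n : Fin p → ℕ} (f : Idx p n → ℝ) :
    ∑ i : Idx p n, f i = ∑ α, ∑ k, f ⟨α, k⟩ := by
  rw [Finset.sum_sigma', Finset.univ_sigma_univ]

lemma group_sum {p : ℕ} {n : Fin p → ℕ} (f : Idx p n → ℝ) (β : Fin p) :
    ∑ i : Idx p n, (if i.1 = β then f i else 0) = ∑ k : Fin (n β), f ⟨β, k⟩ := by
  rw [sigma_sum, Finset.sum_eq_single β]
  · simp
  · intro b _ hb; simp [hb]
  · simp

-- T_x applied row-wise
lemma Tmat_mulVec {p : ℕ} {n : Fin p → ℕ} (x z : Idx p n → ℝ) (i : Idx p n) :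
    (Tmat x).mulVec z i = x i * (∑ k : Fin (n i.1), z ⟨i.1, k⟩) - z i := by
  simp only [Matrix.mulVec, dotProduct, Tmat, sub_mul, ite_mul, one_mul, zero_mul,
    Finset.sum_sub_distrib]
  congr 1
  · have hsw : ∀ j : Idx p n, (if i.1 = j.1 then x i * z j else 0)
        = (if j.1 = i.1 then x i * z j else 0) := by
      intro j; by_cases h : i.1 = j.1
      · simp [h]
      · rw [if_neg h, if_neg (fun h' => h (Eq.symm h'))]
    rw [Finset.sum_congr rfl fun j _ => hsw j, group_sum (fun j => x i * z j) i.1,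
      ← Finset.mul_sum]
  · simp

lemma Tmat_transpose_mulVec {p : ℕ} {n : Fin p → ℕ} (x v : Idx p n → ℝ) (j : Idx p n) :
    (Tmat x)ᵀ.mulVec v j = (∑ k : Fin (n j.1), x ⟨j.1, k⟩ * v ⟨j.1, k⟩) - v j := by
  simp only [Matrix.mulVec, dotProduct, transpose_apply, Tmat, sub_mul, ite_mul, one_mul,
    zero_mul, Finset.sum_sub_distrib]
  congr 1
  · exact group_sum (fun i => x i * v i) j.1
  · simp

/-- For a conservative polymatrix game `(n̲,A)` with formal equilibrium `q`,
skew-symmetric model `A₀` and scaling vector `λ`, the replicator field is Hamiltonian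
in `Γ°_n̲` w.r.t. `π_{A₀}`, with Hamiltonian `H(x) = Σ_β λ_β Σ_{j∈β} q_j log x_j`,
whose gradient has components `λ_β q_j / x_j` for `j ∈ β`. -/
theorem stmt14 {p : ℕ} {n : Fin p → ℕ} (hn : ∀ α, 0 < n α)
    (A A₀ : Matrix (Idx p n) (Idx p n) ℝ) (q : Idx p n → ℝ) (lam : Fin p → ℝ)
    (hq : FormalEq A q) (hA₀ : A₀ᵀ = -A₀) (hlam : ∀ β, lam β ≠ 0)
    (hcons : EqualRows (A - A₀ * Matrix.diagonal (fun i => lam i.1)))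
    (x : Idx p n → ℝ) (hx : x ∈ GammaInt p n) (i : Idx p n) :
    replicator A x i = (piA A₀ x).mulVec (fun j => lam j.1 * q j / x j) i := by
  obtain ⟨hxpos, hxsum⟩ := hx
  obtain ⟨hqeq, hqsum⟩ := hq
  obtain ⟨α, a⟩ := i
  have hxne : ∀ j : Idx p n, x j ≠ 0 := fun j => ne_of_gt (hxpos j)
  set v : Idx p n → ℝ := fun j => lam j.1 * q j / x j with hv
  set C : Matrix (Idx p n) (Idx p n) ℝ := A - A₀ * Matrix.diagonal (fun i => lam i.1) with hC
  -- Step A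
  have hu : (Matrix.diagonal x).mulVec ((Tmat x)ᵀ.mulVec v)
      = fun j => lam j.1 * (x j - q j) := by
    funext j
    rw [Matrix.mulVec_diagonal, Tmat_transpose_mulVec]
    have h1 : (∑ k : Fin (n j.1), x ⟨j.1, k⟩ * v ⟨j.1, k⟩) = lam j.1 := by
      have heach : ∀ k : Fin (n j.1), x ⟨j.1, k⟩ * v ⟨j.1, k⟩ = lam j.1 * q ⟨j.1, k⟩ := by
        intro k; simp only [hv]; have := hxne ⟨j.1, k⟩; field_simp
      rw [Finset.sum_congr rfl fun k _ => heach k, ← Finset.mul_sum, hqsum j.1, mul_one]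
    rw [h1, hv]
    have := hxne j
    field_simp
  -- Step B
  set w : Idx p n → ℝ := A₀.mulVec (fun j => lam j.1 * (x j - q j)) with hwdef
  have hw : ∀ i, w i = A.mulVec x i - A.mulVec q i - C.mulVec (x - q) i := by
    intro i
    have h2 : (fun j : Idx p n => lam j.1 * (x j - q j))
        = (Matrix.diagonal (fun j : Idx p n => lam j.1)).mulVec (x - q) := by
      funext j; rw [Matrix.mulVec_diagonal]; rfl
    have h3 : A₀ * Matrix.diagonal (fun j : Idx p n => lam j.1) = A - C := by
      rw [hC, sub_sub_cancel]
    rw [hwdef, h2, Matrix.mulVec_mulVec, h3, Matrix.sub_mulVec, Matrix.mulVec_sub]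
    simp
  -- Step C
  set c : ℝ := w ⟨α, a⟩ - A.mulVec x ⟨α, a⟩ with hc
  have hconst : ∀ k : Fin (n α), w ⟨α, k⟩ = A.mulVec x ⟨α, k⟩ + c := by
    intro k
    have hCq : C.mulVec (x - q) ⟨α, k⟩ = C.mulVec (x - q) ⟨α, a⟩ := by
      simp only [Matrix.mulVec, dotProduct]
      exact Finset.sum_congr rfl fun j _ => by rw [hcons α j.1 k a j.2]
    have hAq : A.mulVec q ⟨α, k⟩ = A.mulVec q ⟨α, a⟩ := hqeq α k a
    rw [hc, hw ⟨α, k⟩, hw ⟨α, a⟩, hCq, hAq]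
    ring
  -- Final
  rw [replicator, piA, Matrix.neg_mulVec, ← Matrix.mulVec_mulVec, ← Matrix.mulVec_mulVec,
    ← Matrix.mulVec_mulVec, ← Matrix.mulVec_mulVec, hu, ← hwdef]
  have hz : (Matrix.diagonal x).mulVec w = fun k => x k * w k :=
    funext fun k => Matrix.mulVec_diagonal x w k
  rw [hz, Pi.neg_apply, Tmat_mulVec]
  have hsum : ∑ k : Fin (n α), x ⟨α, k⟩ * w ⟨α, k⟩
      = (∑ k : Fin (n α), x ⟨α, k⟩ * A.mulVec x ⟨α, k⟩) + c := by
    rw [Finset.sum_congr rfl fun k _ => by rw [hconst k]]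
    simp only [mul_add, Finset.sum_add_distrib, ← Finset.sum_mul, hxsum α, one_mul]
  have hwi : w ⟨α, a⟩ = A.mulVec x ⟨α, a⟩ + c := by rw [hc]; ring
  rw [hsum, hwi]
  ring
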